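/- arXiv:0807.2565 — 5 statements merged into one kernel-verified Lean document; each statement's English description precedes it below -/
import Mathlib

section
/- Let m ≥ 1, n = 2m, and let f, r, p : ℝ → ℂ be arbitrary functions. Then K_n · 𝒞_n(r) · 𝒞_n(f) · 𝒞_n(p) · K_nᵀ = 𝒞_m(ĝ), where ĝ : ℝ → ℂ is defined by ĝ(x) = (1/2)·( r(x/2)·f(x/2)·p(x/2) + r(x/2+π)·f(x/2+π)·p(x/2+π) ). (This is the one-dimensional Galerkin coarse-grid formula: the coarse matrix R·A·P of a circulant matrix generated by f, with restriction K_n·𝒞_n(r) and prolongation 𝒞_n(p)·K_nᵀ, is again circulant and is generated by ĝ.) -/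
open Matrix

/-- The circulant matrix of size `n × n` generated by the symbol `g`:
`(𝒞_n(g))_{s,t} = (1/n) ∑_{l=0}^{n−1} g(2πl/n)·exp(2πi·l·(s−t)/n)`. -/
noncomputable def circulantOf (n : ℕ) (g : ℝ → ℂ) : Matrix (Fin n) (Fin n) ℂ :=
  fun s t => (1 / (n : ℂ)) * ∑ l : Fin n,
    g (2 * Real.pi * (l : ℕ) / n) *
      Complex.exp (2 * Real.pi * Complex.I * (l : ℕ) * (((s : ℕ) : ℤ) - ((t : ℕ) : ℤ)) / n)

/-- The down-sampling (cutting) matrix `K_n` of size `m × n` with `n = 2m`: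
`(K_n)_{j,k} = 1` if `k = 2j`, `0` otherwise. -/
def cuttingMatrix (m : ℕ) : Matrix (Fin m) (Fin (2 * m)) ℂ :=
  fun j k => if (k : ℕ) = 2 * (j : ℕ) then 1 else 0

/-- Circulant-type matrix generated by point values `c : Fin n → ℂ`. -/
noncomputable def pcMat (n : ℕ) (c : Fin n → ℂ) : Matrix (Fin n) (Fin n) ℂ :=
  fun s t => (1 / (n : ℂ)) * ∑ l : Fin n,
    c l * Complex.exp (2 * Real.pi * Complex.I * (l : ℕ) * (((s : ℕ) : ℤ) - ((t : ℕ) : ℤ)) / n)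

lemma circulantOf_eq_pcMat (n : ℕ) (g : ℝ → ℂ) :
    circulantOf n g = pcMat n (fun l : Fin n => g (2 * Real.pi * (l : ℕ) / n)) := rfl

/-- Orthogonality of discrete Fourier modes. -/
lemma exp_sum_orth (n : ℕ) (hn : 0 < n) (d : ℤ) :
    ∑ u : Fin n, Complex.exp (2 * Real.pi * Complex.I * (d : ℂ) * ((u : ℕ) : ℂ) / n) =
      if (n : ℤ) ∣ d then (n : ℂ) else 0 := by
  have hn' : (n : ℂ) ≠ 0 := Nat.cast_ne_zero.2 hn.ne'
  have hterm : ∀ u : Fin n,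
      Complex.exp (2 * Real.pi * Complex.I * (d : ℂ) * ((u : ℕ) : ℂ) / n)
        = Complex.exp (2 * Real.pi * Complex.I * (d : ℂ) / n) ^ (u : ℕ) := by
    intro u
    rw [← Complex.exp_nat_mul]
    congr 1
    ring
  simp only [hterm]
  rw [Fin.sum_univ_eq_sum_range
    (fun i : ℕ => Complex.exp (2 * Real.pi * Complex.I * (d : ℂ) / n) ^ i)]
  by_cases hd : (n : ℤ) ∣ d
  · obtain ⟨k, rfl⟩ := hd
    have h1 : (2 * (Real.pi : ℂ) * Complex.I * (((n : ℤ) * k : ℤ) : ℂ) / n)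
        = (k : ℂ) * (2 * Real.pi * Complex.I) := by
      push_cast
      field_simp
    rw [if_pos ⟨k, rfl⟩, h1, Complex.exp_int_mul_two_pi_mul_I]
    simp
  · have hz1 : Complex.exp (2 * Real.pi * Complex.I * (d : ℂ) / n) ≠ 1 := by
      intro h
      rw [Complex.exp_eq_one_iff] at h
      obtain ⟨k, hk⟩ := h
      apply hd
      refine ⟨k, ?_⟩
      have hpi : (2 * (Real.pi : ℂ) * Complex.I) ≠ 0 := by
        simp [Real.pi_ne_zero, Complex.I_ne_zero]
      have : (d : ℂ) = (n : ℂ) * (k : ℂ) := by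
        field_simp at hk
        have h2 : (2 * (Real.pi : ℂ) * Complex.I) * (d : ℂ)
            = (2 * (Real.pi : ℂ) * Complex.I) * ((n : ℂ) * (k : ℂ)) := by
          rw [mul_comm] at hk
          linear_combination (2 * (Real.pi : ℂ) * Complex.I) * hk
        exact mul_left_cancel₀ hpi h2
      exact_mod_cast this
    have hzn : Complex.exp (2 * Real.pi * Complex.I * (d : ℂ) / n) ^ n = 1 := by
      rw [← Complex.exp_nat_mul]
      have : (n : ℂ) * (2 * Real.pi * Complex.I * (d : ℂ) / n)
          = (d : ℂ) * (2 * Real.pi * Complex.I) := by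
        field_simp
      rw [this, Complex.exp_int_mul_two_pi_mul_I]
    rw [if_neg hd, geom_sum_eq hz1, hzn]
    simp

/-- Key orthogonality step for the product of two circulant-type matrices. -/
lemma key_sum (n : ℕ) (hn : 0 < n) (s t l l' : Fin n) :
    ∑ u : Fin n,
      Complex.exp (2 * Real.pi * Complex.I * (l : ℕ) * (((s : ℕ) : ℤ) - ((u : ℕ) : ℤ)) / n) *
        Complex.exp (2 * Real.pi * Complex.I * (l' : ℕ) * (((u : ℕ) : ℤ) - ((t : ℕ) : ℤ)) / n)
      = if l' = l then
          (n : ℂ) * Complex.exp (2 * Real.pi * Complex.I * (l : ℕ) *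
            (((s : ℕ) : ℤ) - ((t : ℕ) : ℤ)) / n)
        else 0 := by
  set d : ℤ := ((l' : ℕ) : ℤ) - ((l : ℕ) : ℤ) with hd
  have hterm : ∀ u : Fin n,
      Complex.exp (2 * Real.pi * Complex.I * (l : ℕ) * (((s : ℕ) : ℤ) - ((u : ℕ) : ℤ)) / n) *
        Complex.exp (2 * Real.pi * Complex.I * (l' : ℕ) * (((u : ℕ) : ℤ) - ((t : ℕ) : ℤ)) / n)
      = Complex.exp (2 * Real.pi * Complex.I * (l : ℕ) *
            (((s : ℕ) : ℤ) - ((t : ℕ) : ℤ)) / n) *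
          Complex.exp (2 * Real.pi * Complex.I * ((-d : ℤ) : ℂ) * ((t : ℕ) : ℂ) / n) *
          Complex.exp (2 * Real.pi * Complex.I * (d : ℂ) * ((u : ℕ) : ℂ) / n) := by
    intro u
    rw [← Complex.exp_add, ← Complex.exp_add, ← Complex.exp_add]
    congr 1
    push_cast [hd]
    ring
  simp only [hterm]
  rw [← Finset.mul_sum, exp_sum_orth n hn d]
  by_cases h : l' = l
  · subst h
    have hd0 : d = 0 := by simp [hd]
    rw [if_pos rfl, if_pos (by rw [hd0]; exact dvd_zero _)]
    simp only [hd0, neg_zero, Int.cast_zero, mul_zero, zero_mul, zero_div, Complex.exp_zero,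
      mul_one]
    ring
  · have hnd : ¬ (n : ℤ) ∣ d := by
      intro hdvd
      have h1 : ((l' : ℕ) : ℤ) < n := by exact_mod_cast l'.isLt
      have h2 : ((l : ℕ) : ℤ) < n := by exact_mod_cast l.isLt
      have h3 : (0 : ℤ) ≤ ((l' : ℕ) : ℤ) := Int.natCast_nonneg _
      have h4 : (0 : ℤ) ≤ ((l : ℕ) : ℤ) := Int.natCast_nonneg _
      have h0 : d = 0 := Int.eq_zero_of_abs_lt_dvd hdvd
        (abs_lt.mpr ⟨by rw [hd]; omega, by rw [hd]; omega⟩)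
      apply h
      apply Fin.ext
      rw [hd] at h0
      omega
    rw [if_neg hnd, if_neg h, mul_zero]


/-- Product of two circulant-type matrices. -/
lemma pcMat_mul (n : ℕ) (hn : 0 < n) (c d : Fin n → ℂ) :
    pcMat n c * pcMat n d = pcMat n (fun l => c l * d l) := by
  have hn' : (n : ℂ) ≠ 0 := Nat.cast_ne_zero.2 hn.ne'
  ext s t
  simp only [Matrix.mul_apply, pcMat]
  calc
    ∑ u : Fin n,
        ((1 / (n : ℂ)) * ∑ l : Fin n, c l *
          Complex.exp (2 * Real.pi * Complex.I * (l : ℕ) *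
            (((s : ℕ) : ℤ) - ((u : ℕ) : ℤ)) / n)) *
        ((1 / (n : ℂ)) * ∑ l' : Fin n, d l' *
          Complex.exp (2 * Real.pi * Complex.I * (l' : ℕ) *
            (((u : ℕ) : ℤ) - ((t : ℕ) : ℤ)) / n))
      = ∑ u : Fin n, ∑ l : Fin n, ∑ l' : Fin n,
          (1 / (n : ℂ)) * (1 / (n : ℂ)) * (c l * d l') *
            (Complex.exp (2 * Real.pi * Complex.I * (l : ℕ) *
              (((s : ℕ) : ℤ) - ((u : ℕ) : ℤ)) / n) *
            Complex.exp (2 * Real.pi * Complex.I * (l' : ℕ) *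
              (((u : ℕ) : ℤ) - ((t : ℕ) : ℤ)) / n)) := by
        refine Finset.sum_congr rfl fun u _ => ?_
        rw [mul_mul_mul_comm, Finset.sum_mul_sum, Finset.mul_sum]
        refine Finset.sum_congr rfl fun l _ => ?_
        rw [Finset.mul_sum]
        refine Finset.sum_congr rfl fun l' _ => ?_
        ring
    _ = ∑ l : Fin n, ∑ l' : Fin n, (1 / (n : ℂ)) * (1 / (n : ℂ)) * (c l * d l') *
          ∑ u : Fin n,
            Complex.exp (2 * Real.pi * Complex.I * (l : ℕ) *
              (((s : ℕ) : ℤ) - ((u : ℕ) : ℤ)) / n) *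
            Complex.exp (2 * Real.pi * Complex.I * (l' : ℕ) *
              (((u : ℕ) : ℤ) - ((t : ℕ) : ℤ)) / n) := by
        rw [Finset.sum_comm]
        refine Finset.sum_congr rfl fun l _ => ?_
        rw [Finset.sum_comm]
        refine Finset.sum_congr rfl fun l' _ => ?_
        rw [Finset.mul_sum]
    _ = ∑ l : Fin n, (1 / (n : ℂ)) * ((c l * d l) *
          Complex.exp (2 * Real.pi * Complex.I * (l : ℕ) *
            (((s : ℕ) : ℤ) - ((t : ℕ) : ℤ)) / n)) := by
        refine Finset.sum_congr rfl fun l _ => ?_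
        simp only [key_sum n hn s t l]
        rw [Finset.sum_eq_single l]
        · rw [if_pos rfl]
          field_simp
        · intro b _ hb
          rw [if_neg hb, mul_zero]
        · intro hl
          exact absurd (Finset.mem_univ l) hl
    _ = (1 / (n : ℂ)) * ∑ l : Fin n, (c l * d l) *
          Complex.exp (2 * Real.pi * Complex.I * (l : ℕ) *
            (((s : ℕ) : ℤ) - ((t : ℕ) : ℤ)) / n) := by
        rw [Finset.mul_sum]

/-- Entry of `K · M · Kᵀ`. -/
lemma cut_apply (m : ℕ) (M : Matrix (Fin (2 * m)) (Fin (2 * m)) ℂ) (j k : Fin m) :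
    (cuttingMatrix m * M * (cuttingMatrix m)ᵀ) j k
      = M ⟨2 * (j : ℕ), by omega⟩ ⟨2 * (k : ℕ), by omega⟩ := by
  have hcond : ∀ (x : Fin m) (u : Fin (2 * m)),
      ((u : ℕ) = 2 * (x : ℕ)) = (u = ⟨2 * (x : ℕ), by omega⟩) := by
    intro x u
    simp [Fin.ext_iff]
  simp only [Matrix.mul_apply, Matrix.transpose_apply, cuttingMatrix, hcond]
  simp [Finset.sum_ite_eq', Finset.mul_sum]

/-- Splitting a sum over `Fin (2m)` into two halves. -/
lemma sum_fin_two_mul (m : ℕ) (F : ℕ → ℂ) :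
    ∑ l : Fin (2 * m), F (l : ℕ) = ∑ l : Fin m, F (l : ℕ) + ∑ l : Fin m, F (m + (l : ℕ)) := by
  rw [Fin.sum_univ_eq_sum_range (fun i => F i), Fin.sum_univ_eq_sum_range (fun i => F i),
    Fin.sum_univ_eq_sum_range (fun i => F (m + i)), Finset.range_eq_Ico,
    ← Finset.sum_Ico_consecutive (fun i => F i) (Nat.zero_le m) (by omega : m ≤ 2 * m)]
  congr 1
  rw [Finset.sum_Ico_eq_sum_range]
  simp [two_mul]
  rw [Finset.sum_Ico_eq_sum_range]
  simp [two_mul]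

/-- The one-dimensional Galerkin coarse-grid formula: for `n = 2m`,
`K_n · 𝒞_n(r) · 𝒞_n(f) · 𝒞_n(p) · K_nᵀ = 𝒞_m(ĝ)` where
`ĝ(x) = (1/2)·(r(x/2)f(x/2)p(x/2) + r(x/2+π)f(x/2+π)p(x/2+π))`. -/
theorem coarse_grid_circulant (m : ℕ) (hm : 1 ≤ m) (f r p : ℝ → ℂ) (ghat : ℝ → ℂ)
    (hghat : ∀ x : ℝ, ghat x = (1 / 2) *
      (r (x / 2) * f (x / 2) * p (x / 2) +
        r (x / 2 + Real.pi) * f (x / 2 + Real.pi) * p (x / 2 + Real.pi))) :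
    cuttingMatrix m * circulantOf (2 * m) r * circulantOf (2 * m) f *
      circulantOf (2 * m) p * (cuttingMatrix m)ᵀ = circulantOf m ghat := by
  have hm0 : 0 < m := hm
  have hn0 : 0 < 2 * m := by omega
  have hmC : (m : ℂ) ≠ 0 := Nat.cast_ne_zero.2 hm0.ne'
  have hmR : (m : ℝ) ≠ 0 := Nat.cast_ne_zero.2 hm0.ne'
  have h1 : circulantOf (2 * m) r * circulantOf (2 * m) f * circulantOf (2 * m) p
      = pcMat (2 * m) (fun l : Fin (2 * m) =>
          r (2 * Real.pi * (l : ℕ) / ((2 * m : ℕ) : ℝ)) *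
            f (2 * Real.pi * (l : ℕ) / ((2 * m : ℕ) : ℝ)) *
            p (2 * Real.pi * (l : ℕ) / ((2 * m : ℕ) : ℝ))) := by
    rw [circulantOf_eq_pcMat, circulantOf_eq_pcMat, circulantOf_eq_pcMat,
      pcMat_mul _ hn0, pcMat_mul _ hn0]
  have hassoc : cuttingMatrix m * circulantOf (2 * m) r * circulantOf (2 * m) f *
      circulantOf (2 * m) p * (cuttingMatrix m)ᵀ
      = cuttingMatrix m *
          (circulantOf (2 * m) r * circulantOf (2 * m) f * circulantOf (2 * m) p) *
          (cuttingMatrix m)ᵀ := by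
    rw [Matrix.mul_assoc (cuttingMatrix m) (circulantOf (2 * m) r),
      Matrix.mul_assoc (cuttingMatrix m)]
  rw [hassoc, h1]
  ext j k
  rw [cut_apply]
  simp only [pcMat, circulantOf, Fin.val_mk]
  rw [sum_fin_two_mul m (fun l : ℕ =>
    r (2 * Real.pi * (l : ℝ) / ((2 * m : ℕ) : ℝ)) *
      f (2 * Real.pi * (l : ℝ) / ((2 * m : ℕ) : ℝ)) *
      p (2 * Real.pi * (l : ℝ) / ((2 * m : ℕ) : ℝ)) *
      Complex.exp (2 * (Real.pi : ℂ) * Complex.I * (l : ℂ) *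
        ((((2 * (j : ℕ) : ℕ) : ℤ) : ℂ) - (((2 * (k : ℕ) : ℕ) : ℤ) : ℂ)) / ((2 * m : ℕ) : ℂ)))]
  rw [← Finset.sum_add_distrib, Finset.mul_sum, Finset.mul_sum]
  refine Finset.sum_congr rfl fun l _ => ?_
  rw [hghat (2 * Real.pi * ((l : ℕ) : ℝ) / (m : ℝ))]
  have harg1 : (2 * Real.pi * ((l : ℕ) : ℝ) / (m : ℝ)) / 2
      = 2 * Real.pi * ((l : ℕ) : ℝ) / ((2 * m : ℕ) : ℝ) := by
    push_cast
    ring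
  have harg2 : (2 * Real.pi * ((l : ℕ) : ℝ) / (m : ℝ)) / 2 + Real.pi
      = 2 * Real.pi * ((m + (l : ℕ) : ℕ) : ℝ) / ((2 * m : ℕ) : ℝ) := by
    push_cast
    field_simp
    ring
  rw [harg2, harg1]
  have e1 : Complex.exp (2 * (Real.pi : ℂ) * Complex.I * ((l : ℕ) : ℂ) *
        ((((2 * (j : ℕ) : ℕ) : ℤ) : ℂ) - (((2 * (k : ℕ) : ℕ) : ℤ) : ℂ)) / ((2 * m : ℕ) : ℂ))
      = Complex.exp (2 * (Real.pi : ℂ) * Complex.I * ((l : ℕ) : ℂ) *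
        ((((j : ℕ) : ℤ) : ℂ) - (((k : ℕ) : ℤ) : ℂ)) / (m : ℂ)) := by
    congr 1
    push_cast
    field_simp
  have e2 : Complex.exp (2 * (Real.pi : ℂ) * Complex.I * ((m + (l : ℕ) : ℕ) : ℂ) *
        ((((2 * (j : ℕ) : ℕ) : ℤ) : ℂ) - (((2 * (k : ℕ) : ℕ) : ℤ) : ℂ)) / ((2 * m : ℕ) : ℂ))
      = Complex.exp (2 * (Real.pi : ℂ) * Complex.I * ((l : ℕ) : ℂ) *
        ((((j : ℕ) : ℤ) : ℂ) - (((k : ℕ) : ℤ) : ℂ)) / (m : ℂ)) := by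
    have h2 : (2 * (Real.pi : ℂ) * Complex.I * ((m + (l : ℕ) : ℕ) : ℂ) *
          ((((2 * (j : ℕ) : ℕ) : ℤ) : ℂ) - (((2 * (k : ℕ) : ℕ) : ℤ) : ℂ)) / ((2 * m : ℕ) : ℂ))
        = ((((j : ℕ) : ℤ) - ((k : ℕ) : ℤ) : ℤ) : ℂ) * (2 * (Real.pi : ℂ) * Complex.I) +
          2 * (Real.pi : ℂ) * Complex.I * ((l : ℕ) : ℂ) *
            ((((j : ℕ) : ℤ) : ℂ) - (((k : ℕ) : ℤ) : ℂ)) / (m : ℂ) := by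
      push_cast
      field_simp
    rw [h2, Complex.exp_add, Complex.exp_int_mul_two_pi_mul_I, one_mul]
  rw [e1, e2]
  push_cast
  field_simp
end

section
/- Let f, q : ℝ → ℝ be continuous and 2π-periodic with f(x) ≥ 0 and q(x) ≥ 0 for all x, let x⁰ ∈ ℝ and let m ≥ 1. Assume: (i) there exist c₁, c₂, δ > 0 such that c₁·|t|^m ≤ f(x⁰+t) ≤ c₂·|t|^m for all |t| < δ (so f has a zero of exact order m at x⁰); (ii) q(x⁰) > 0; (iii) there exists C > 0 such that q(x⁰+π+t) ≤ C·|t|^m for all |t| < δ. Define ĝ(x) = (1/2)·( q(x/2)·f(x/2) + q(x/2+π)·f(x/2+π) ). Then there exist c₁', c₂', δ' > 0 such that c₁'·|t|^m ≤ ĝ(2x⁰ + t) ≤ c₂'·|t|^m for all |t| < δ'. (That is, the coarse symbol ĝ has a zero at y⁰ = 2x⁰ (mod 2π) of exactly the same order m as the zero x⁰ of f.) -/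
/-- Coarse symbol zero propagation: if the fine symbol `f` (continuous,
`2π`-periodic, nonnegative) has a zero of exact order `m` at `x⁰`, the product
of the grid transfer symbols `q = r·p` (continuous, `2π`-periodic, nonnegative)
is positive at `x⁰` and is `O(|t|^m)` at the mirror point `x⁰+π`, then the
Galerkin coarse symbol `ĝ(x) = (1/2)(q(x/2)f(x/2) + q(x/2+π)f(x/2+π))` has a
zero of exactly the same order `m` at `2x⁰`. -/
theorem coarse_symbol_zero_order (f q : ℝ → ℝ)
    (hfc : Continuous f) (hqc : Continuous q)
    (hfper : ∀ x : ℝ, f (x + 2 * Real.pi) = f x)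
    (hqper : ∀ x : ℝ, q (x + 2 * Real.pi) = q x)
    (hf0 : ∀ x : ℝ, 0 ≤ f x) (hq0 : ∀ x : ℝ, 0 ≤ q x)
    (x0 : ℝ) (m : ℕ) (hm : 1 ≤ m)
    (c₁ c₂ δ : ℝ) (hc₁ : 0 < c₁) (hc₂ : 0 < c₂) (hδ : 0 < δ)
    (hzero : ∀ t : ℝ, |t| < δ →
      c₁ * |t| ^ m ≤ f (x0 + t) ∧ f (x0 + t) ≤ c₂ * |t| ^ m)
    (hqx0 : 0 < q x0)
    (C : ℝ) (hC : 0 < C)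
    (hqmirror : ∀ t : ℝ, |t| < δ → q (x0 + Real.pi + t) ≤ C * |t| ^ m)
    (ghat : ℝ → ℝ)
    (hghat : ∀ x : ℝ, ghat x = (1 / 2) *
      (q (x / 2) * f (x / 2) + q (x / 2 + Real.pi) * f (x / 2 + Real.pi))) :
    ∃ c₁' c₂' δ' : ℝ, 0 < c₁' ∧ 0 < c₂' ∧ 0 < δ' ∧
      ∀ t : ℝ, |t| < δ' →
        c₁' * |t| ^ m ≤ ghat (2 * x0 + t) ∧ ghat (2 * x0 + t) ≤ c₂' * |t| ^ m := by
  obtain ⟨δq, hδq, hq_near⟩ := Metric.continuousAt_iff.mp (hqc.continuousAt (x := x0))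
    (q x0 / 2) (by positivity)
  obtain ⟨δf, hδf, hf_near⟩ := Metric.continuousAt_iff.mp (hfc.continuousAt (x := x0 + Real.pi))
    1 one_pos
  have hB0 : 0 < f (x0 + Real.pi) + 1 := by have := hf0 (x0 + Real.pi); linarith
  refine ⟨(1/2) * (q x0 / 2) * c₁ * (1/2)^m,
    (1/2) * ((3 * q x0 / 2) * c₂ + C * (f (x0 + Real.pi) + 1)) * (1/2)^m,
    min δ (min δq δf), by positivity, by positivity, by positivity, ?_⟩
  intro t ht
  have habs : |t / 2| = |t| / 2 := by rw [abs_div]; norm_num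
  have h1 : |t| < δ := lt_of_lt_of_le ht (min_le_left _ _)
  have h2 : |t| < δq := lt_of_lt_of_le ht ((min_le_right _ _).trans (min_le_left _ _))
  have h3 : |t| < δf := lt_of_lt_of_le ht ((min_le_right _ _).trans (min_le_right _ _))
  have htnn : 0 ≤ |t| := abs_nonneg t
  have ht2δ : |t / 2| < δ := by rw [habs]; linarith
  have hX : |t / 2| ^ m = |t| ^ m * (1/2)^m := by
    rw [habs, div_eq_mul_one_div, mul_pow]
  have hXnn : 0 ≤ |t| ^ m * (1/2)^m := by positivity
  -- q near x0
  have hdq : dist (x0 + t / 2) x0 < δq := by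
    rw [Real.dist_eq, show x0 + t / 2 - x0 = t / 2 by ring, habs]; linarith
  have hq' := hq_near hdq
  rw [Real.dist_eq, abs_lt] at hq'
  have hqA_lb : q x0 / 2 ≤ q (x0 + t / 2) := by linarith [hq'.1]
  have hqA_ub : q (x0 + t / 2) ≤ 3 * q x0 / 2 := by linarith [hq'.2]
  -- f near x0 + π
  have hdf : dist (x0 + Real.pi + t / 2) (x0 + Real.pi) < δf := by
    rw [Real.dist_eq, show x0 + Real.pi + t / 2 - (x0 + Real.pi) = t / 2 by ring, habs]; linarith
  have hf' := hf_near hdf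
  rw [Real.dist_eq, abs_lt] at hf'
  have hFb_ub : f (x0 + Real.pi + t / 2) ≤ f (x0 + Real.pi) + 1 := by linarith [hf'.1]
  -- f near x0, q mirror
  obtain ⟨hFa_lb, hFa_ub⟩ := hzero (t / 2) ht2δ
  have hQb_ub := hqmirror (t / 2) ht2δ
  rw [hX] at hFa_lb hFa_ub hQb_ub
  -- rewrite ghat
  rw [hghat, show (2 * x0 + t) / 2 = x0 + t / 2 by ring,
    show x0 + t / 2 + Real.pi = x0 + Real.pi + t / 2 by ring]
  have u1 : q (x0 + t / 2) * f (x0 + t / 2) ≤ (3 * q x0 / 2) * (c₂ * (|t| ^ m * (1/2)^m)) :=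
    mul_le_mul hqA_ub hFa_ub (hf0 _) (by positivity)
  have u2 : q (x0 + Real.pi + t / 2) * f (x0 + Real.pi + t / 2) ≤
      (C * (|t| ^ m * (1/2)^m)) * (f (x0 + Real.pi) + 1) :=
    mul_le_mul hQb_ub hFb_ub (hf0 _) (by positivity)
  have l1 : (q x0 / 2) * (c₁ * (|t| ^ m * (1/2)^m)) ≤ q (x0 + t / 2) * f (x0 + t / 2) :=
    mul_le_mul hqA_lb hFa_lb (by positivity) (hq0 _)
  have l2 : 0 ≤ q (x0 + Real.pi + t / 2) * f (x0 + Real.pi + t / 2) :=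
    mul_nonneg (hq0 _) (hf0 _)
  constructor <;> nlinarith [l1, l2, u1, u2]
end

section
/- Define g_c(x) = ((1+cos x)/2)²·(2 − cos x), the symbol of the cubic interpolation. Then: (i) lim_{x→0, x≠0} (g_c(x) − 1)/x⁴ = −3/16, and (ii) lim_{x→0, x≠0} g_c(x+π)/x⁴ = 3/16. (Hence the cubic interpolation grid transfer operator has low frequency order LF = 4 and high frequency order HF = 4.) -/
open Filter Topology

lemma sin_div_self_tendsto : Tendsto (fun x : ℝ => Real.sin x / x) (𝓝[≠] 0) (𝓝 1) := by
  have h := hasDerivAt_iff_tendsto_slope.mp (Real.hasDerivAt_sin 0)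
  rw [Real.cos_zero] at h
  exact h.congr fun x => by simp [slope_def_field]

lemma half_map : Tendsto (fun x : ℝ => x / 2) (𝓝[≠] (0:ℝ)) (𝓝[≠] (0:ℝ)) := by
  rw [tendsto_nhdsWithin_iff]
  constructor
  · have : Tendsto (fun x : ℝ => x / 2) (𝓝 0) (𝓝 (0/2)) :=
      (tendsto_id.div_const 2)
    simpa using this.mono_left nhdsWithin_le_nhds
  · filter_upwards [self_mem_nhdsWithin] with x hx
    simp only [Set.mem_compl_iff, Set.mem_singleton_iff] at hx ⊢
    intro h; apply hx; field_simp at h; linarith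

lemma one_sub_cos_div_sq : Tendsto (fun x : ℝ => (1 - Real.cos x) / x ^ 2)
    (𝓝[≠] (0:ℝ)) (𝓝 (1/2 : ℝ)) := by
  have hq : Tendsto (fun x : ℝ => Real.sin (x/2) / (x/2)) (𝓝[≠] (0:ℝ)) (𝓝 1) :=
    sin_div_self_tendsto.comp half_map
  have hlim : Tendsto (fun x : ℝ => (Real.sin (x/2) / (x/2)) ^ 2 * (1/2))
      (𝓝[≠] (0:ℝ)) (𝓝 ((1:ℝ)^2 * (1/2))) := (hq.pow 2).mul_const _
  refine (Tendsto.congr' ?_ hlim).congr' (by rfl) |>.mono_right (by norm_num)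
  filter_upwards [self_mem_nhdsWithin] with x hx
  have hx0 : x ≠ 0 := hx
  have hsin : Real.sin (x/2) ^ 2 = (1 - Real.cos x) / 2 := by
    have h1 : Real.sin (x/2) ^ 2 = 1 - Real.cos (x/2) ^ 2 := by
      have := Real.sin_sq_add_cos_sq (x/2); linarith
    have h2 : Real.cos (x/2) ^ 2 = 1/2 + Real.cos x / 2 := by
      have := Real.cos_sq (x/2)
      simpa [mul_div_cancel₀] using this
    rw [h1, h2]; ring
  rw [div_pow, hsin]
  field_simp

/-- The cubic interpolation symbol `g_c(x) = ((1+cos x)/2)²·(2−cos x)` has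
low frequency order `4`, with `(g_c(x) − 1)/x⁴ → −3/16`, and high frequency
order `4`, with `g_c(x+π)/x⁴ → 3/16` as `x → 0`. -/
theorem cubic_interpolation_orders (gc : ℝ → ℝ)
    (hgc : ∀ x : ℝ, gc x = ((1 + Real.cos x) / 2) ^ 2 * (2 - Real.cos x)) :
    Tendsto (fun x : ℝ => (gc x - 1) / x ^ 4) (𝓝[≠] 0) (𝓝 (-(3 / 16) : ℝ)) ∧
    Tendsto (fun x : ℝ => gc (x + Real.pi) / x ^ 4) (𝓝[≠] 0)
      (𝓝 ((3 / 16 : ℝ))) := by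
  have hk := one_sub_cos_div_sq
  have hcos : Tendsto (fun x : ℝ => Real.cos x) (𝓝[≠] (0:ℝ)) (𝓝 1) := by
    have := Real.continuous_cos.continuousAt (x := (0:ℝ))
    simpa [Real.cos_zero] using this.continuousWithinAt.tendsto
  constructor
  · have hlim : Tendsto
        (fun x : ℝ => ((1 - Real.cos x) / x ^ 2) ^ 2 * ((1 - Real.cos x) / 4 - 3/4))
        (𝓝[≠] (0:ℝ)) (𝓝 (((1:ℝ)/2) ^ 2 * ((1 - 1) / 4 - 3/4))) := by
      exact (hk.pow 2).mul ((((tendsto_const_nhds.sub hcos).div_const 4).sub tendsto_const_nhds))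
    have : ((1:ℝ)/2) ^ 2 * ((1 - 1) / 4 - 3/4) = -(3/16) := by norm_num
    rw [this] at hlim
    refine Tendsto.congr' ?_ hlim
    filter_upwards [self_mem_nhdsWithin] with x hx
    have hx0 : (x:ℝ) ≠ 0 := hx
    rw [hgc]
    field_simp
    ring
  · have hlim : Tendsto
        (fun x : ℝ => ((1 - Real.cos x) / x ^ 2) ^ 2 * ((2 + Real.cos x) / 4))
        (𝓝[≠] (0:ℝ)) (𝓝 (((1:ℝ)/2) ^ 2 * ((2 + 1) / 4))) := by
      exact (hk.pow 2).mul ((tendsto_const_nhds.add hcos).div_const 4)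
    have : ((1:ℝ)/2) ^ 2 * ((2 + 1) / 4) = (3/16 : ℝ) := by norm_num
    rw [this] at hlim
    refine Tendsto.congr' ?_ hlim
    filter_upwards [self_mem_nhdsWithin] with x hx
    have hx0 : (x:ℝ) ≠ 0 := hx
    rw [hgc, Real.cos_add, Real.cos_pi, Real.sin_pi]
    field_simp
    ring
end

section
/- Let s ≥ 1 and let r : ℤ → ℝ be finitely supported. Assume the associated restriction leaves all polynomials of degree at most s−1 invariant, in the sense that for every real polynomial q with deg q < s one has Σ_{j∈ℤ} r_j · q(j) = q(0). Then the symbol g(x) = Σ_{j∈ℤ} r_j·e^{−ijx} satisfies g(x) = 1 + O(|x|^s) as x → 0; that is, the restriction has low frequency order at least s. -/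
open Filter Topology Asymptotics

/-- If the restriction with finitely supported stencil `r` leaves all
polynomials of degree `< s` invariant (`Σ_j r_j q(j) = q(0)`), then its symbol
`g(x) = Σ_j r_j e^{−ijx}` satisfies `g(x) = 1 + O(|x|^s)` as `x → 0`; that is,
the restriction has low frequency order at least `s`. -/
theorem restriction_polynomial_invariance_LF (s : ℕ) (hs : 1 ≤ s)
    (r : ℤ → ℝ) (hr : (Function.support r).Finite)
    (hpoly : ∀ q : Polynomial ℝ, q.degree < (s : WithBot ℕ) →
      ∑ᶠ j : ℤ, r j * q.eval (j : ℝ) = q.eval 0) :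
    (fun x : ℝ =>
        (∑ᶠ j : ℤ, (r j : ℂ) * Complex.exp (-(Complex.I * j * x))) - 1)
      =O[𝓝[≠] (0 : ℝ)] fun x : ℝ => |x| ^ s := by
  classical
  set F : Finset ℤ := hr.toFinset with hF
  have hmemF : ∀ j : ℤ, j ∉ F → r j = 0 := by
    intro j hj
    by_contra h
    exact hj (hr.mem_toFinset.mpr h)
  -- rewrite the finsum as a finite sum
  have hsum : ∀ x : ℝ,
      ∑ᶠ j : ℤ, (r j : ℂ) * Complex.exp (-(Complex.I * j * x)) =
        ∑ j ∈ F, (r j : ℂ) * Complex.exp (-(Complex.I * j * x)) := by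
    intro x
    apply finsum_eq_finset_sum_of_support_subset
    intro j hj
    simp only [Function.mem_support] at hj
    by_contra h
    exact hj (by rw [hmemF j h]; simp)
  -- moment conditions
  have hmom : ∀ m : ℕ, m < s →
      ∑ j ∈ F, r j * (j : ℝ) ^ m = if m = 0 then 1 else 0 := by
    intro m hm
    have hdeg : (Polynomial.X ^ m : Polynomial ℝ).degree < (s : WithBot ℕ) := by
      rw [Polynomial.degree_X_pow]
      exact_mod_cast hm
    have h := hpoly (Polynomial.X ^ m) hdeg
    have h2 : ∑ᶠ j : ℤ, r j * ((Polynomial.X ^ m : Polynomial ℝ).eval (j : ℝ)) =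
        ∑ j ∈ F, r j * (j : ℝ) ^ m := by
      rw [show (fun j : ℤ => r j * ((Polynomial.X ^ m : Polynomial ℝ).eval (j : ℝ)))
          = fun j : ℤ => r j * (j : ℝ) ^ m by funext j; simp]
      apply finsum_eq_finset_sum_of_support_subset
      intro j hj
      simp only [Function.mem_support] at hj
      by_contra h'
      exact hj (by rw [hmemF j h']; simp)
    rw [h2] at h
    rw [h]
    rcases Nat.eq_zero_or_pos m with h0 | h0
    · simp [h0]
    · simp [Nat.pos_iff_ne_zero.mp h0, zero_pow (Nat.pos_iff_ne_zero.mp h0)]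
  -- the Taylor partial sums of the symbol collapse to 1
  have hone : ∀ x : ℝ,
      ∑ j ∈ F, (r j : ℂ) *
        (∑ m ∈ Finset.range s, (-(Complex.I * j * x)) ^ m / m.factorial) = 1 := by
    intro x
    have hswap : ∑ j ∈ F, (r j : ℂ) *
        (∑ m ∈ Finset.range s, (-(Complex.I * j * x)) ^ m / m.factorial) =
        ∑ m ∈ Finset.range s,
          (∑ j ∈ F, (r j : ℂ) * (j : ℂ) ^ m) * ((-(Complex.I * x)) ^ m / m.factorial) := by
      simp_rw [Finset.mul_sum]
      rw [Finset.sum_comm]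
      apply Finset.sum_congr rfl
      intro m _
      rw [Finset.sum_mul]
      apply Finset.sum_congr rfl
      intro j _
      rw [show (-(Complex.I * j * x)) ^ m = (j : ℂ) ^ m * (-(Complex.I * x)) ^ m by
        rw [← mul_pow]; ring_nf]
      ring
    rw [hswap]
    have hc : ∀ m : ℕ, m < s →
        (∑ j ∈ F, (r j : ℂ) * (j : ℂ) ^ m) = if m = 0 then 1 else 0 := by
      intro m hm
      have h1 : ∑ j ∈ F, (r j : ℂ) * (j : ℂ) ^ m =
          ((∑ j ∈ F, r j * (j : ℝ) ^ m : ℝ) : ℂ) := by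
        push_cast
        rfl
      rw [h1, hmom m hm]
      split_ifs <;> norm_num
    rw [Finset.sum_congr rfl (fun m hm => by
      rw [hc m (Finset.mem_range.mp hm)])]
    rw [Finset.sum_eq_single 0]
    · simp
    · intro m _ hm0; simp [hm0]
    · intro h
      exact absurd (Finset.mem_range.mpr (Nat.lt_of_lt_of_le Nat.zero_lt_one hs)) h
  -- bound setup
  set B : ℝ := 1 + ∑ j ∈ F, |(j : ℝ)| with hB
  have hBpos : 0 < B := by
    have : (0 : ℝ) ≤ ∑ j ∈ F, |(j : ℝ)| := Finset.sum_nonneg fun j _ => abs_nonneg _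
    linarith
  have hjB : ∀ j ∈ F, |(j : ℝ)| ≤ B := by
    intro j hj
    have := Finset.single_le_sum (f := fun j : ℤ => |(j : ℝ)|)
      (fun i _ => abs_nonneg _) hj
    linarith
  set K : ℝ := (s.succ : ℝ) * ((s.factorial : ℝ) * s)⁻¹ with hK
  set C : ℝ := K * ∑ j ∈ F, |r j| * |(j : ℝ)| ^ s with hC
  rw [Asymptotics.isBigO_iff]
  refine ⟨C, ?_⟩
  have hev : ∀ᶠ x : ℝ in 𝓝[≠] (0 : ℝ), |x| ≤ 1 / B := by
    apply eventually_nhdsWithin_of_eventually_nhds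
    have h1B : 0 < 1 / B := one_div_pos.mpr hBpos
    have : Set.Icc (-(1/B)) (1/B) ∈ 𝓝 (0 : ℝ) :=
      Icc_mem_nhds (by linarith) h1B
    filter_upwards [this] with x hx
    exact abs_le.mpr hx
  filter_upwards [hev] with x hx
  rw [hsum x]
  have key : ∑ j ∈ F, (r j : ℂ) * Complex.exp (-(Complex.I * j * x)) - 1 =
      ∑ j ∈ F, (r j : ℂ) *
        (Complex.exp (-(Complex.I * j * x)) -
          ∑ m ∈ Finset.range s, (-(Complex.I * j * x)) ^ m / m.factorial) := by
    have hsub : ∑ j ∈ F, (r j : ℂ) *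
        (Complex.exp (-(Complex.I * j * x)) -
          ∑ m ∈ Finset.range s, (-(Complex.I * j * x)) ^ m / m.factorial) =
        (∑ j ∈ F, (r j : ℂ) * Complex.exp (-(Complex.I * j * x))) -
          ∑ j ∈ F, (r j : ℂ) *
            ∑ m ∈ Finset.range s, (-(Complex.I * j * x)) ^ m / m.factorial := by
      rw [← Finset.sum_sub_distrib]
      apply Finset.sum_congr rfl
      intro j _
      ring
    rw [hsub, hone x]
  rw [key]
  calc ‖∑ j ∈ F, (r j : ℂ) *
        (Complex.exp (-(Complex.I * j * x)) -
          ∑ m ∈ Finset.range s, (-(Complex.I * j * x)) ^ m / m.factorial)‖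
      ≤ ∑ j ∈ F, ‖(r j : ℂ) *
        (Complex.exp (-(Complex.I * j * x)) -
          ∑ m ∈ Finset.range s, (-(Complex.I * j * x)) ^ m / m.factorial)‖ :=
        norm_sum_le _ _
    _ ≤ ∑ j ∈ F, |r j| * (|(j : ℝ)| ^ s * |x| ^ s * K) := by
        apply Finset.sum_le_sum
        intro j hj
        rw [norm_mul]
        have habs : ‖(-(Complex.I * j * x) : ℂ)‖ = |(j : ℝ)| * |x| := by
          simp [norm_neg, abs_mul, Complex.norm_intCast, Complex.norm_real]
        have hle1 : ‖(-(Complex.I * j * x) : ℂ)‖ ≤ 1 := by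
          rw [show ‖(-(Complex.I * j * x) : ℂ)‖ =
              ‖(-(Complex.I * j * x) : ℂ)‖ from rfl, habs]
          calc |(j : ℝ)| * |x| ≤ B * (1 / B) := by
                apply mul_le_mul (hjB j hj) hx (abs_nonneg _)
                  (le_of_lt hBpos)
            _ = 1 := by field_simp
        have hb := Complex.exp_bound hle1 (Nat.lt_of_lt_of_le Nat.zero_lt_one hs)
        have : ‖Complex.exp (-(Complex.I * j * x)) -
            ∑ m ∈ Finset.range s, (-(Complex.I * j * x)) ^ m / m.factorial‖ ≤
            (|(j : ℝ)| * |x|) ^ s * K := by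
          rw [show (|(j : ℝ)| * |x|) ^ s = ‖(-(Complex.I * j * x) : ℂ)‖ ^ s by
            rw [show ‖(-(Complex.I * j * x) : ℂ)‖ =
              ‖(-(Complex.I * j * x) : ℂ)‖ from rfl, habs]]
          exact hb
        have hr' : ‖((r j : ℝ) : ℂ)‖ = |r j| := by simp
        rw [hr']
        calc |r j| * ‖Complex.exp (-(Complex.I * j * x)) -
              ∑ m ∈ Finset.range s, (-(Complex.I * j * x)) ^ m / m.factorial‖
            ≤ |r j| * ((|(j : ℝ)| * |x|) ^ s * K) := by
              apply mul_le_mul_of_nonneg_left this (abs_nonneg _)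
          _ = |r j| * (|(j : ℝ)| ^ s * |x| ^ s * K) := by rw [mul_pow]
    _ = C * |x| ^ s := by
        rw [hC, Finset.mul_sum, Finset.sum_mul]
        apply Finset.sum_congr rfl
        intro j _
        ring
    _ = C * ‖|x| ^ s‖ := by
        rw [Real.norm_eq_abs, abs_of_nonneg (pow_nonneg (abs_nonneg x) s)]
end

section
/- Let s ≥ 1 and let t : ℤ → ℝ be finitely supported. Assume the associated prolongation leaves all polynomials of degree at most s−1 invariant, in the sense that for every real polynomial q with deg q < s and every j ∈ ℤ one has Σ_{k∈ℤ} t_{j−2k}·q(k) = q(j/2) (q evaluated over the reals). Then the normalized symbol g(x) = (1/2)·Σ_{j∈ℤ} t_j·e^{−ijx} satisfies both g(x) = 1 + O(|x|^s) and g(x+π) = O(|x|^s) as x → 0; that is, the prolongation has low frequency order at least s and high frequency order at least s. -/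
open Filter Topology Asymptotics

lemma split_finsum_aux (F : ℤ → ℝ) (hF : (Function.support F).Finite) :
    ∑ᶠ j : ℤ, F j = (∑ᶠ k : ℤ, F (-2*k)) + ∑ᶠ k : ℤ, F (1-2*k) := by
  have hE : (Set.univ : Set ℤ) = ((fun k : ℤ => -2*k) '' Set.univ) ∪ ((fun k : ℤ => 1-2*k) '' Set.univ) := by
    ext j
    simp only [Set.mem_univ, Set.mem_union, Set.mem_image, true_iff, true_and]
    rcases Int.even_or_odd j with ⟨k, hk⟩ | ⟨k, hk⟩
    · exact Or.inl ⟨-k, by omega⟩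
    · exact Or.inr ⟨-k, by omega⟩
  have hdisj : Disjoint ((fun k : ℤ => -2*k) '' Set.univ) ((fun k : ℤ => 1-2*k) '' Set.univ) := by
    rw [Set.disjoint_left]
    rintro j hj1 hj2
    obtain ⟨k, -, hk⟩ := hj1
    obtain ⟨k', -, hk'⟩ := hj2
    simp only at hk hk'
    omega
  rw [← finsum_mem_univ, hE, finsum_mem_union' hdisj (hF.inter_of_right _) (hF.inter_of_right _),
    finsum_mem_image (fun a _ b _ h => by omega),
    finsum_mem_image (fun a _ b _ h => by omega), finsum_mem_univ, finsum_mem_univ]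

lemma symbol_bigO_aux (s : ℕ) (hs : 1 ≤ s) (S : Finset ℤ) (c : ℤ → ℝ) (a : ℂ)
    (hmom : ∀ m, m < s → ∑ j ∈ S, (c j : ℂ) * (j:ℂ)^m = if m = 0 then a else 0) :
    (fun x : ℝ => (∑ j ∈ S, (c j : ℂ) * Complex.exp (-(Complex.I * j * x))) - a)
      =O[𝓝 (0:ℝ)] fun x => |x|^s := by
  obtain ⟨N, hN1, hNj⟩ : ∃ N : ℝ, 1 ≤ N ∧ ∀ j ∈ S, |(j:ℝ)| ≤ N := by
    have h0 : (0:ℝ) ≤ ∑ j ∈ S, |(j:ℝ)| := Finset.sum_nonneg fun i _ => abs_nonneg _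
    refine ⟨1 + ∑ j ∈ S, |(j:ℝ)|, by linarith, fun j hj => ?_⟩
    have := Finset.single_le_sum (f := fun j : ℤ => |(j:ℝ)|) (fun i _ => abs_nonneg _) hj
    linarith
  have hN0 : 0 < N := lt_of_lt_of_le one_pos hN1
  obtain ⟨K, hK0, hK⟩ : ∃ K : ℝ, 0 ≤ K ∧ ∀ z : ℂ, ‖z‖ ≤ 1 →
      ‖Complex.exp z - ∑ m ∈ Finset.range s, z ^ m / (m.factorial : ℂ)‖
        ≤ ‖z‖ ^ s * K := by
    refine ⟨(s.succ : ℝ) * ((s.factorial : ℝ) * s)⁻¹, by positivity, fun z hz => ?_⟩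
    exact Complex.exp_bound hz (lt_of_lt_of_le one_pos hs)
  refine IsBigO.of_bound ((∑ j ∈ S, |c j|) * (N ^ s * K)) ?_
  have hx : ∀ᶠ x : ℝ in 𝓝 0, |x| ≤ 1 / N := by
    have := eventually_abs_sub_lt (0:ℝ) (by positivity : (0:ℝ) < 1/N)
    filter_upwards [this] with x hx
    simpa using hx.le
  filter_upwards [hx] with x hx
  have key : (∑ j ∈ S, (c j:ℂ) * Complex.exp (-(Complex.I*j*x))) - a
      = ∑ j ∈ S, (c j : ℂ) * (Complex.exp (-(Complex.I*j*x))
          - ∑ m ∈ Finset.range s, (-(Complex.I*j*x))^m / (m.factorial : ℂ)) := by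
    have h2 : ∑ j ∈ S, (c j:ℂ) * ∑ m ∈ Finset.range s, (-(Complex.I*j*x))^m/(m.factorial : ℂ) = a := by
      calc ∑ j ∈ S, (c j:ℂ) * ∑ m ∈ Finset.range s, (-(Complex.I*j*x))^m/(m.factorial:ℂ)
          = ∑ m ∈ Finset.range s, (∑ j ∈ S, (c j:ℂ) * (j:ℂ)^m) * ((-(Complex.I*x))^m/(m.factorial:ℂ)) := by
            simp_rw [Finset.mul_sum]
            rw [Finset.sum_comm]
            refine Finset.sum_congr rfl fun m _ => ?_
            rw [Finset.sum_mul]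
            refine Finset.sum_congr rfl fun j _ => ?_
            have h3 : (-(Complex.I*(j:ℂ)*x)) = (j:ℂ) * (-(Complex.I*x)) := by ring
            rw [h3, mul_pow]; ring
        _ = a := by
            rw [Finset.sum_congr rfl (fun m hm => by rw [hmom m (Finset.mem_range.1 hm)])]
            rw [Finset.sum_eq_single 0]
            · simp
            · intro m _ hm0; simp [hm0]
            · intro h; exact absurd (Finset.mem_range.2 hs) h
    rw [Finset.sum_congr rfl (fun j _ => mul_sub (α := ℂ) _ _ _), Finset.sum_sub_distrib, h2]
  rw [key]
  have hterm : ∀ j ∈ S, ‖(c j : ℂ) * (Complex.exp (-(Complex.I*j*x))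
      - ∑ m ∈ Finset.range s, (-(Complex.I*j*x))^m / (m.factorial : ℂ))‖
      ≤ |c j| * (N ^ s * K * |x| ^ s) := by
    intro j hj
    rw [norm_mul, Complex.norm_real, Real.norm_eq_abs]
    have habs : ‖-(Complex.I*(j:ℂ)*x)‖ = |(j:ℝ)| * |x| := by
      simp [norm_neg, norm_mul, Complex.norm_real, Complex.norm_intCast]
    have hle1 : ‖-(Complex.I*(j:ℂ)*x)‖ ≤ 1 := by
      rw [habs]
      calc |(j:ℝ)| * |x| ≤ N * (1/N) :=
            mul_le_mul (hNj j hj) hx (abs_nonneg _) (le_of_lt hN0)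
        _ = 1 := by field_simp
    have hE : ‖Complex.exp (-(Complex.I*(j:ℂ)*x))
        - ∑ m ∈ Finset.range s, (-(Complex.I*(j:ℂ)*x))^m / (m.factorial : ℂ)‖
        ≤ N ^ s * K * |x| ^ s := by
      refine le_trans (hK _ hle1) ?_
      rw [habs]
      have h5 : (|(j:ℝ)| * |x|) ^ s ≤ (N * |x|)^s :=
        pow_le_pow_left₀ (by positivity) (mul_le_mul_of_nonneg_right (hNj j hj) (abs_nonneg x)) s
      calc (|(j:ℝ)| * |x|) ^ s * K ≤ (N * |x|)^s * K := by gcongr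
        _ = N ^ s * K * |x|^s := by rw [mul_pow]; ring
    exact mul_le_mul_of_nonneg_left hE (abs_nonneg _)
  calc ‖∑ j ∈ S, (c j : ℂ) * (Complex.exp (-(Complex.I*j*x))
      - ∑ m ∈ Finset.range s, (-(Complex.I*j*x))^m / (m.factorial : ℂ))‖
      ≤ ∑ j ∈ S, |c j| * (N ^ s * K * |x| ^ s) :=
        le_trans (norm_sum_le _ _) (Finset.sum_le_sum hterm)
    _ = (∑ j ∈ S, |c j|) * (N ^ s * K) * ‖|x| ^ s‖ := by
        rw [← Finset.sum_mul, Real.norm_eq_abs, abs_of_nonneg (by positivity : (0:ℝ) ≤ |x|^s)]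
        ring

/-- If the prolongation with finitely supported stencil `t` leaves all
polynomials of degree `< s` invariant (`Σ_k t_{j−2k} q(k) = q(j/2)` for all
`j`), then its normalized symbol `g(x) = (1/2)Σ_j t_j e^{−ijx}` satisfies both
`g(x) = 1 + O(|x|^s)` and `g(x+π) = O(|x|^s)` as `x → 0`; that is, the
prolongation has low and high frequency orders at least `s`. -/
theorem prolongation_polynomial_invariance_LF_HF (s : ℕ) (hs : 1 ≤ s)
    (t : ℤ → ℝ) (ht : (Function.support t).Finite)
    (hpoly : ∀ q : Polynomial ℝ, q.degree < (s : WithBot ℕ) → ∀ j : ℤ,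
      ∑ᶠ k : ℤ, t (j - 2 * k) * q.eval (k : ℝ) = q.eval ((j : ℝ) / 2))
    (g : ℝ → ℂ)
    (hg : ∀ x : ℝ, g x =
      (1 / 2) * ∑ᶠ j : ℤ, (t j : ℂ) * Complex.exp (-(Complex.I * j * x))) :
    ((fun x : ℝ => g x - 1) =O[𝓝[≠] (0 : ℝ)] fun x : ℝ => |x| ^ s) ∧
    ((fun x : ℝ => g (x + Real.pi)) =O[𝓝[≠] (0 : ℝ)] fun x : ℝ => |x| ^ s) := by
  classical
  set S := ht.toFinset with hSdef
  have hmemS : ∀ j : ℤ, t j ≠ 0 → j ∈ S := fun j hj => ht.mem_toFinset.2 hj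
  have hsuppf : ∀ f : ℤ → ℝ, (Function.support (fun j => t j * f j)).Finite :=
    fun f => ht.subset (Function.support_mul_subset_left _ _)
  -- even moments
  have heven : ∀ m, m < s → ∑ᶠ k : ℤ, t (-2*k) * ((-2*k : ℤ) : ℝ)^m = (0:ℝ)^m := by
    intro m hm
    have hdeg : ((Polynomial.C (-2:ℝ) * Polynomial.X)^m).degree < (s : WithBot ℕ) := by
      have h1 : ((Polynomial.C (-2:ℝ) * Polynomial.X)^m).degree ≤ (m : WithBot ℕ) := by
        compute_degree
        exact le_rfl
      exact lt_of_le_of_lt h1 (by exact_mod_cast hm)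
    have hq := hpoly ((Polynomial.C (-2:ℝ) * Polynomial.X)^m) hdeg 0
    simp only [Polynomial.eval_pow, Polynomial.eval_mul, Polynomial.eval_C,
      Polynomial.eval_X] at hq
    rw [show ((-2:ℝ) * (((0:ℤ):ℝ)/2)) = 0 by norm_num] at hq
    rw [← hq]
    refine finsum_congr fun k => ?_
    rw [show ((0:ℤ) - 2*k) = -2*k by ring]
    push_cast
    ring_nf
  -- odd moments
  have hodd : ∀ m, m < s → ∑ᶠ k : ℤ, t (1-2*k) * ((1-2*k : ℤ) : ℝ)^m = (0:ℝ)^m := by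
    intro m hm
    have hdeg : ((Polynomial.C (1:ℝ) - Polynomial.C 2 * Polynomial.X)^m).degree < (s : WithBot ℕ) := by
      have h1 : ((Polynomial.C (1:ℝ) - Polynomial.C 2 * Polynomial.X)^m).degree ≤ (m : WithBot ℕ) := by
        compute_degree
        exact le_rfl
      exact lt_of_le_of_lt h1 (by exact_mod_cast hm)
    have hq := hpoly ((Polynomial.C (1:ℝ) - Polynomial.C 2 * Polynomial.X)^m) hdeg 1
    simp only [Polynomial.eval_pow, Polynomial.eval_sub, Polynomial.eval_mul, Polynomial.eval_C,
      Polynomial.eval_X] at hq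
    rw [show ((1:ℝ) - 2 * (((1:ℤ):ℝ)/2)) = 0 by norm_num] at hq
    rw [← hq]
    refine finsum_congr fun k => ?_
    rw [show ((1:ℤ) - 2*k) = 1-2*k by ring]
    push_cast
    ring_nf
  -- the two moment families, over ℂ, for the Finset S
  have hzpow_even : ∀ k : ℤ, ((-1:ℝ)^(-2*k : ℤ)) = 1 := by
    intro k
    exact Even.neg_one_zpow ⟨-k, by ring⟩
  have hzpow_odd : ∀ k : ℤ, ((-1:ℝ)^(1-2*k : ℤ)) = -1 := by
    intro k
    exact Odd.neg_one_zpow ⟨-k, by ring⟩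
  have hM1 : ∀ m, m < s → ∑ j ∈ S, ((t j : ℝ) : ℂ) * (j:ℂ)^m = if m = 0 then 2 else 0 := by
    intro m hm
    have hr : ∑ j ∈ S, t j * (j:ℝ)^m = (0:ℝ)^m + (0:ℝ)^m := by
      rw [← finsum_eq_sum_of_support_subset _
        (fun j hj => Finset.mem_coe.2 (hmemS j (by
          intro h; apply hj; simp only [Function.mem_support] at *; simp [h])))]
      rw [split_finsum_aux _ (hsuppf _), heven m hm, hodd m hm]
    have : ((∑ j ∈ S, t j * (j:ℝ)^m : ℝ) : ℂ) = ∑ j ∈ S, ((t j : ℝ):ℂ) * (j:ℂ)^m := by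
      push_cast; rfl
    rw [← this, hr]
    rcases Nat.eq_zero_or_pos m with h | h
    · subst h; norm_num
    · rw [if_neg (Nat.pos_iff_ne_zero.1 h), zero_pow (Nat.pos_iff_ne_zero.1 h)]
      norm_num
  have hM2 : ∀ m, m < s →
      ∑ j ∈ S, ((t j * (-1:ℝ)^j : ℝ) : ℂ) * (j:ℂ)^m = if m = 0 then (0:ℂ) else 0 := by
    intro m hm
    have hr : ∑ j ∈ S, (t j * (-1:ℝ)^j) * (j:ℝ)^m = 0 := by
      have h1 : ∑ j ∈ S, (t j * (-1:ℝ)^j) * (j:ℝ)^m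
          = ∑ᶠ j : ℤ, t j * ((-1:ℝ)^j * (j:ℝ)^m) := by
        rw [finsum_eq_sum_of_support_subset _
          (fun j hj => Finset.mem_coe.2 (hmemS j (by
            intro h; apply hj; simp only [Function.mem_support] at *; simp [h])))]
        exact Finset.sum_congr rfl fun j _ => by ring
      rw [h1, split_finsum_aux _ (hsuppf _)]
      have h2 : ∑ᶠ k : ℤ, t (-2*k) * ((-1:ℝ)^(-2*k:ℤ) * ((-2*k:ℤ):ℝ)^m) = (0:ℝ)^m := by
        rw [← heven m hm]
        exact finsum_congr fun k => by rw [hzpow_even k]; ring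
      have h3 : ∑ᶠ k : ℤ, t (1-2*k) * ((-1:ℝ)^(1-2*k:ℤ) * ((1-2*k:ℤ):ℝ)^m) = -(0:ℝ)^m := by
        have h4 : ∑ᶠ k : ℤ, t (1-2*k) * ((-1:ℝ)^(1-2*k:ℤ) * ((1-2*k:ℤ):ℝ)^m)
            = ∑ᶠ k : ℤ, -(t (1-2*k) * ((1-2*k:ℤ):ℝ)^m) :=
          finsum_congr fun k => by rw [hzpow_odd k]; ring
        rw [h4, finsum_neg_distrib, hodd m hm]
      rw [h2, h3]; ring
    have : ((∑ j ∈ S, (t j * (-1:ℝ)^j) * (j:ℝ)^m : ℝ) : ℂ)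
        = ∑ j ∈ S, ((t j * (-1:ℝ)^j : ℝ):ℂ) * (j:ℂ)^m := by
      push_cast; rfl
    rw [← this, hr]
    simp
  -- apply the analytic lemma
  have hB1 := symbol_bigO_aux s hs S t 2 hM1
  have hB2 := symbol_bigO_aux s hs S (fun j => t j * (-1:ℝ)^j) 0 hM2
  have hgS : ∀ x : ℝ, g x = (1/2 : ℂ) * ∑ j ∈ S, (t j : ℂ) * Complex.exp (-(Complex.I*j*x)) := by
    intro x
    rw [hg x]
    congr 1
    refine finsum_eq_sum_of_support_subset _ fun j hj => Finset.mem_coe.2 (hmemS j ?_)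
    intro h
    apply hj
    simp only [Function.mem_support] at *
    simp [h]
  constructor
  · have heq : (fun x : ℝ => g x - 1)
        = fun x : ℝ => (1/2 : ℂ) * ((∑ j ∈ S, (t j : ℂ) * Complex.exp (-(Complex.I*j*x))) - 2) := by
      funext x
      rw [hgS x]; ring
    rw [heq]
    exact ((hB1.const_mul_left ((1:ℂ)/2)).mono nhdsWithin_le_nhds)
  · have hflip : ∀ (j : ℤ) (x : ℝ),
        Complex.exp (-(Complex.I*(j:ℂ)*((x + Real.pi : ℝ):ℂ)))
          = (((-1:ℝ)^j : ℝ) : ℂ) * Complex.exp (-(Complex.I*(j:ℂ)*(x:ℂ))) := by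
      intro j x
      have h1 : -(Complex.I*(j:ℂ)*((x + Real.pi : ℝ):ℂ))
          = ((-j : ℤ):ℂ) * ((Real.pi:ℂ) * Complex.I) + -(Complex.I*(j:ℂ)*(x:ℂ)) := by
        push_cast; ring
      rw [h1, Complex.exp_add, Complex.exp_int_mul, Complex.exp_pi_mul_I]
      congr 1
      have : (((-1:ℝ)^j : ℝ) : ℂ) = ((-1:ℂ))^(j:ℤ) := by push_cast; rfl
      rw [this]
      rcases Int.even_or_odd j with h | h
      · rw [Even.neg_one_zpow h, Even.neg_one_zpow (by simpa using h.neg)]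
      · rw [Odd.neg_one_zpow h, Odd.neg_one_zpow (by simpa using h.neg)]
    have heq : (fun x : ℝ => g (x + Real.pi))
        = fun x : ℝ => (1/2 : ℂ) *
          ((∑ j ∈ S, (((t j * (-1:ℝ)^j : ℝ)):ℂ) * Complex.exp (-(Complex.I*j*x))) - 0) := by
      funext x
      rw [hgS (x + Real.pi), sub_zero]
      congr 1
      refine Finset.sum_congr rfl fun j _ => ?_
      rw [hflip j x]
      push_cast
      ring
    rw [heq]
    exact ((hB2.const_mul_left ((1:ℂ)/2)).mono nhdsWithin_le_nhds)
end
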